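/- For all y ∈ [0, 1/4] and x ∈ [y, 1/2 − y], one has cos(2πy) − cos(2πx) ≥ 2π(x² − y²). -/

import Mathlib

/-- For all `y ∈ [0, 1/4]` and `x ∈ [y, 1/2 − y]`,
`cos(2πy) − cos(2πx) ≥ 2π(x² − y²)`. -/
theorem stmt_8 :
    ∀ y ∈ Set.Icc (0 : ℝ) (1 / 4), ∀ x ∈ Set.Icc y (1 / 2 - y),
      2 * Real.pi * (x ^ 2 - y ^ 2) ≤ Real.cos (2 * Real.pi * y) - Real.cos (2 * Real.pi * x) := by
  intro y hy x hx
  obtain ⟨hy0, hy4⟩ := hy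
  obtain ⟨hxy, hx2⟩ := hx
  have hpi : (0:ℝ) < Real.pi := Real.pi_pos
  have hpi4 : Real.pi < 4 := by
    have := Real.pi_lt_d2; linarith
  have key : Real.cos (2 * Real.pi * y) - Real.cos (2 * Real.pi * x)
      = 2 * Real.sin (Real.pi * (x + y)) * Real.sin (Real.pi * (x - y)) := by
    rw [Real.cos_sub_cos,
      show (2 * Real.pi * y + 2 * Real.pi * x) / 2 = Real.pi * (x + y) by ring,
      show (2 * Real.pi * y - 2 * Real.pi * x) / 2 = -(Real.pi * (x - y)) by ring,
      Real.sin_neg]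
    ring
  rw [key]
  have h1 : 2 * (x + y) ≤ Real.sin (Real.pi * (x + y)) := by
    have := Real.mul_le_sin (x := Real.pi * (x + y))
      (by nlinarith) (by nlinarith)
    calc 2 * (x + y) = 2 / Real.pi * (Real.pi * (x + y)) := by
          field_simp
      _ ≤ _ := this
  have h2 : 2 * (x - y) ≤ Real.sin (Real.pi * (x - y)) := by
    have := Real.mul_le_sin (x := Real.pi * (x - y))
      (by nlinarith) (by nlinarith)
    calc 2 * (x - y) = 2 / Real.pi * (Real.pi * (x - y)) := by
          field_simp
      _ ≤ _ := this
  have hA : (0:ℝ) ≤ 2 * (x + y) := by linarith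
  have hB : (0:ℝ) ≤ 2 * (x - y) := by linarith
  nlinarith [mul_le_mul h1 h2 hB (by linarith), mul_nonneg (by linarith : (0:ℝ) ≤ x - y) (by linarith : (0:ℝ) ≤ x + y)]
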